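/- arXiv:1612.01508 — 2 statements merged into one kernel-verified Lean document; each statement's English description precedes it below -/
import Mathlib

section
/- Let K≥2 be an integer, M=⌊K/2⌋, μ∈Δ_d, and H∈S^d. If ζ_1,…,ζ_K are i.i.d. with common distribution P_μ, then E[exp(Tr(H·ω[ζ^K]))] ≤ ( E[exp(Tr((H/M)·ω_{12}[ζ²]))] )^M, where ζ² = (ζ_1,ζ_2). -/
open Matrix MeasureTheory Real

noncomputable section

/-- The discrete distribution `P_μ` on ℝ^d assigning mass `μ i` to the basis vector `e_i`. -/
def discDist {d : ℕ} (μ : Fin d → ℝ) : Measure (Fin d → ℝ) :=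
  ∑ i, ENNReal.ofReal (μ i) • Measure.dirac (Pi.single i 1)

/-- `ω_{ij} = (1/2)(ζ_iζ_jᵀ + ζ_jζ_iᵀ)` for two vectors. -/
def omegaPair {d : ℕ} (a b : Fin d → ℝ) : Matrix (Fin d) (Fin d) ℝ :=
  (1/2 : ℝ) • (vecMulVec a b + vecMulVec b a)

/-- The quadratic lifting `ω[ζ^K] = (2/(K(K−1)))·Σ_{i<j} ω_{ij}[ζ^K]`. -/
def omegaLift {d K : ℕ} (ζ : Fin K → Fin d → ℝ) : Matrix (Fin d) (Fin d) ℝ :=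
  (2 / ((K : ℝ) * ((K : ℝ) - 1))) •
    ∑ p ∈ Finset.univ.filter (fun p : Fin K × Fin K => p.1 < p.2),
      omegaPair (ζ p.1) (ζ p.2)

/-- `Φ(H;Z) = ln(Σ_{i,j} Z_{ij} e^{H_{ij}})`. -/
def PhiD {d : ℕ} (H Z : Matrix (Fin d) (Fin d) ℝ) : ℝ :=
  Real.log (∑ i, ∑ j, Z i j * Real.exp (H i j))


lemma lintegral_discDist {d : ℕ} (μ : Fin d → ℝ) (f : (Fin d → ℝ) → ENNReal) :
    ∫⁻ x, f x ∂(discDist μ) = ∑ i, ENNReal.ofReal (μ i) * f (Pi.single i 1) := by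
  rw [discDist, lintegral_finset_sum_measure]
  simp [lintegral_smul_measure, lintegral_dirac]

lemma discDist_apply {d : ℕ} (μ : Fin d → ℝ) {s : Set (Fin d → ℝ)} (hs : MeasurableSet s) :
    discDist μ s = ∑ i, ENNReal.ofReal (μ i) * s.indicator 1 (Pi.single i 1) := by
  rw [discDist]
  rw [Measure.finset_sum_apply]
  simp [Measure.dirac_apply' _ hs]

instance discDist_finite {d : ℕ} (μ : Fin d → ℝ) : IsFiniteMeasure (discDist μ) := by
  constructor
  rw [discDist, Measure.finset_sum_apply]
  simp only [Measure.smul_apply, smul_eq_mul]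
  exact ENNReal.sum_lt_top.mpr fun i _ => ENNReal.mul_lt_top ENNReal.ofReal_lt_top (by simp)

lemma pi_discDist {d K : ℕ} (μ : Fin d → ℝ) :
    Measure.pi (fun _ : Fin K => discDist μ) =
      ∑ a : Fin K → Fin d, (∏ k, ENNReal.ofReal (μ (a k))) •
        Measure.dirac (fun k => Pi.single (a k) (1:ℝ)) := by
  refine Measure.pi_eq fun s hs => ?_
  rw [Measure.finset_sum_apply]
  simp only [Measure.smul_apply, smul_eq_mul,
    Measure.dirac_apply' _ (MeasurableSet.univ_pi hs)]
  have : ∀ a : Fin K → Fin d,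
      (Set.pi Set.univ s).indicator (1 : (∀ _ : Fin K, Fin d → ℝ) → ENNReal) (fun k => Pi.single (a k) 1)
      = ∏ k, (s k).indicator (1 : (Fin d → ℝ) → ENNReal) (Pi.single (a k) 1) := by
    intro a
    by_cases h : (fun k => Pi.single (a k) (1:ℝ)) ∈ Set.pi Set.univ s
    · rw [Set.indicator_of_mem h]
      rw [Set.mem_univ_pi] at h
      simp [Set.indicator_of_mem, h]
    · rw [Set.indicator_of_notMem h]
      rw [Set.mem_univ_pi] at h
      push_neg at h
      obtain ⟨k, hk⟩ := h
      exact (Finset.prod_eq_zero (Finset.mem_univ k) (by simp [Set.indicator_of_notMem hk])).symm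
  simp_rw [this, ← Finset.prod_mul_distrib, discDist_apply μ (hs _)]
  exact (Fintype.prod_sum (R := ENNReal) (κ := fun _ : Fin K => Fin d) (fun k i => ENNReal.ofReal (μ i) * (s k).indicator 1 (Pi.single i 1))).symm

lemma exists_perm_pair {α : Type*} [DecidableEq α] {u v u' v' : α} (huv : u ≠ v) (h' : u' ≠ v') :
    ∃ ρ : Equiv.Perm α, ρ u = u' ∧ ρ v = v' := by
  refine ⟨(Equiv.swap (Equiv.swap u u' v) v') * (Equiv.swap u u'), ?_, ?_⟩
  · simp only [Equiv.Perm.mul_apply, Equiv.swap_apply_left]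
    have hne : Equiv.swap u u' v ≠ u' := by
      rcases eq_or_ne v u' with h | h
      · subst h
        rw [Equiv.swap_apply_right]
        exact fun he => huv (he.symm ▸ rfl)
      · rw [Equiv.swap_apply_of_ne_of_ne huv.symm h]
        exact h
    exact Equiv.swap_apply_of_ne_of_ne (Ne.symm hne) h'
  · simp only [Equiv.Perm.mul_apply, Equiv.swap_apply_left]

lemma sum_perm_pair_congr {K : ℕ} (F : Fin K → Fin K → ℝ) {u v u' v' : Fin K}
    (huv : u ≠ v) (h' : u' ≠ v') :
    ∑ σ : Equiv.Perm (Fin K), F (σ u) (σ v) = ∑ σ : Equiv.Perm (Fin K), F (σ u') (σ v') := by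
  obtain ⟨ρ, h1, h2⟩ := exists_perm_pair h' huv
  calc ∑ σ : Equiv.Perm (Fin K), F (σ u) (σ v)
      = ∑ σ : Equiv.Perm (Fin K), F ((σ * ρ) u') ((σ * ρ) v') := by
        simp only [Equiv.Perm.mul_apply, h1, h2]
    _ = _ := Equiv.sum_comp (Equiv.mulRight ρ) (fun σ => F (σ u') (σ v'))

lemma sum_perm_pair {K : ℕ} (F : Fin K → Fin K → ℝ) {u v : Fin K} (huv : u ≠ v) :
    ((K * K - K : ℕ) : ℝ) * ∑ σ : Equiv.Perm (Fin K), F (σ u) (σ v) =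
      (K.factorial : ℝ) *
        ∑ p ∈ Finset.univ.filter (fun p : Fin K × Fin K => p.1 ≠ p.2), F p.1 p.2 := by
  set D := Finset.univ.filter (fun p : Fin K × Fin K => p.1 ≠ p.2) with hDdef
  have hD : ∀ p ∈ D, p.1 ≠ p.2 := fun p hp => (Finset.mem_filter.mp hp).2
  have hcard : D.card = K * K - K := by
    have : D = (Finset.univ : Finset (Fin K)).offDiag := by
      ext p; simp [Finset.mem_offDiag, hDdef]
    rw [this, Finset.offDiag_card]; simp
  have h1 : ∑ p ∈ D, (∑ σ : Equiv.Perm (Fin K), F (σ p.1) (σ p.2)) =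
      D.card • ∑ σ : Equiv.Perm (Fin K), F (σ u) (σ v) := by
    rw [Finset.sum_congr rfl (fun p hp => sum_perm_pair_congr F (hD p hp) huv),
      Finset.sum_const]
  have h2 : ∑ p ∈ D, (∑ σ : Equiv.Perm (Fin K), F (σ p.1) (σ p.2)) =
      ∑ _σ : Equiv.Perm (Fin K), ∑ p ∈ D, F p.1 p.2 := by
    rw [Finset.sum_comm]
    refine Finset.sum_congr rfl fun σ _ => ?_
    refine Finset.sum_nbij' (fun p => (σ p.1, σ p.2)) (fun p => (σ⁻¹ p.1, σ⁻¹ p.2))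
      ?_ ?_ ?_ ?_ ?_
    · intro p hp
      simp only [hDdef, Finset.mem_filter, Finset.mem_univ, true_and] at hp ⊢
      exact fun h => hp (σ.injective h)
    · intro p hp
      simp only [hDdef, Finset.mem_filter, Finset.mem_univ, true_and] at hp ⊢
      exact fun h => hp (σ⁻¹.injective h)
    · intro p _; simp
    · intro p _; simp
    · intro p _; rfl
  rw [Finset.sum_const, Finset.card_univ, Fintype.card_perm, Fintype.card_fin] at h2
  rw [h1, hcard, nsmul_eq_mul, nsmul_eq_mul] at h2
  exact h2

lemma omegaPair_comm {d : ℕ} (a b : Fin d → ℝ) : omegaPair a b = omegaPair b a := by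
  rw [omegaPair, omegaPair, add_comm]

lemma trace_omegaLift {d K : ℕ} (H : Matrix (Fin d) (Fin d) ℝ) (ζ : Fin K → Fin d → ℝ) :
    (H * omegaLift ζ).trace = (2 / ((K : ℝ) * ((K : ℝ) - 1))) *
      ∑ p ∈ Finset.univ.filter (fun p : Fin K × Fin K => p.1 < p.2),
        (H * omegaPair (ζ p.1) (ζ p.2)).trace := by
  rw [omegaLift, Matrix.mul_smul, Matrix.trace_smul, Matrix.mul_sum, Matrix.trace_sum,
    smul_eq_mul]

lemma trace_smul_mul {d : ℕ} (c : ℝ) (H W : Matrix (Fin d) (Fin d) ℝ) :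
    ((c • H) * W).trace = c * (H * W).trace := by
  rw [Matrix.smul_mul, Matrix.trace_smul, smul_eq_mul]

lemma sum_ne_eq_two_mul_lt {K : ℕ} (f : Fin K → Fin K → ℝ) (hf : ∀ i j, f i j = f j i) :
    ∑ p ∈ Finset.univ.filter (fun p : Fin K × Fin K => p.1 ≠ p.2), f p.1 p.2 =
      2 * ∑ p ∈ Finset.univ.filter (fun p : Fin K × Fin K => p.1 < p.2), f p.1 p.2 := by
  have hsplit : Finset.univ.filter (fun p : Fin K × Fin K => p.1 ≠ p.2) =
      Finset.univ.filter (fun p : Fin K × Fin K => p.1 < p.2) ∪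
      Finset.univ.filter (fun p : Fin K × Fin K => p.2 < p.1) := by
    rw [← Finset.filter_or]
    exact Finset.filter_congr fun p _ => by
      constructor
      · intro h; exact lt_or_gt_of_ne h
      · intro h; rcases h with h | h
        · exact h.ne
        · exact h.ne'
  have hdisj : Disjoint (Finset.univ.filter (fun p : Fin K × Fin K => p.1 < p.2))
      (Finset.univ.filter (fun p : Fin K × Fin K => p.2 < p.1)) := by
    rw [Finset.disjoint_filter]
    intro p _ h1 h2
    exact absurd h2 (not_lt.mpr h1.le)
  rw [hsplit, Finset.sum_union hdisj]
  have : ∑ p ∈ Finset.univ.filter (fun p : Fin K × Fin K => p.2 < p.1), f p.1 p.2 =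
      ∑ p ∈ Finset.univ.filter (fun p : Fin K × Fin K => p.1 < p.2), f p.1 p.2 := by
    refine Finset.sum_nbij' (fun p => (p.2, p.1)) (fun p => (p.2, p.1)) ?_ ?_ ?_ ?_ ?_
    · intro p hp; simpa using (Finset.mem_filter.mp hp).2
    · intro p hp; simpa using (Finset.mem_filter.mp hp).2
    · intro p _; rfl
    · intro p _; rfl
    · intro p _; exact hf p.1 p.2
  rw [this]; ring

lemma jensen_exp {n : ℕ} (hn : 0 < n) {ι : Type*} [Fintype ι] (hcard : Fintype.card ι = n)
    (x : ι → ℝ) :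
    Real.exp ((n : ℝ)⁻¹ * ∑ σ, x σ) ≤ (n : ℝ)⁻¹ * ∑ σ, Real.exp (x σ) := by
  have hn' : (0:ℝ) < n := by exact_mod_cast hn
  have h := convexOn_exp.map_sum_le (t := Finset.univ) (w := fun _ : ι => (n:ℝ)⁻¹)
    (p := x) (fun _ _ => by positivity)
    (by simp [hcard, mul_inv_cancel₀ hn'.ne']) (fun _ _ => Set.mem_univ _)
  simpa [smul_eq_mul, Finset.mul_sum] using h

lemma stepA {d K M : ℕ} (hK : 2 ≤ K) (hM : 1 ≤ M) (p : Fin M → Fin 2 → Fin K)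
    (hp : ∀ m, p m 0 ≠ p m 1) (H : Matrix (Fin d) (Fin d) ℝ) (ζ : Fin K → Fin d → ℝ) :
    Real.exp ((H * omegaLift ζ).trace) ≤ (K.factorial : ℝ)⁻¹ *
      ∑ σ : Equiv.Perm (Fin K), ∏ m,
        Real.exp ((((M:ℝ)⁻¹ • H) * omegaPair (ζ (σ (p m 0))) (ζ (σ (p m 1)))).trace) := by
  set f : Fin K → Fin K → ℝ := fun i j => (H * omegaPair (ζ i) (ζ j)).trace with hf
  have hfsymm : ∀ i j, f i j = f j i := fun i j => by
    simp only [hf]; rw [omegaPair_comm]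
  have hfacpos : (0:ℝ) < (K.factorial : ℝ) := by
    exact_mod_cast K.factorial_pos
  have hM0 : (0:ℝ) < (M:ℝ) := by exact_mod_cast hM
  have hKR : (2:ℝ) ≤ (K:ℝ) := by exact_mod_cast hK
  have hKK : ((K * K - K : ℕ) : ℝ) = (K:ℝ) * ((K:ℝ) - 1) := by
    have h : K ≤ K * K := Nat.le_mul_of_pos_left K (by omega)
    push_cast [h]; ring
  have hKK0 : (0:ℝ) < (K:ℝ) * ((K:ℝ) - 1) := by nlinarith
  set S : ℝ := ∑ q ∈ Finset.univ.filter (fun q : Fin K × Fin K => q.1 < q.2), f q.1 q.2 with hS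
  have hm : ∀ m : Fin M, ∑ σ : Equiv.Perm (Fin K), f (σ (p m 0)) (σ (p m 1)) =
      (K.factorial : ℝ) * (2 * S) / ((K:ℝ) * ((K:ℝ) - 1)) := by
    intro m
    have h := sum_perm_pair f (hp m)
    rw [sum_ne_eq_two_mul_lt f hfsymm, hKK, ← hS] at h
    rw [eq_div_iff hKK0.ne']
    linarith [h]
  have hid : (K.factorial : ℝ)⁻¹ *
      ∑ σ : Equiv.Perm (Fin K), ∑ m, (M:ℝ)⁻¹ * f (σ (p m 0)) (σ (p m 1)) =
      (H * omegaLift ζ).trace := by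
    rw [Finset.sum_comm]
    have : ∀ m : Fin M, ∑ σ : Equiv.Perm (Fin K), (M:ℝ)⁻¹ * f (σ (p m 0)) (σ (p m 1)) =
        (M:ℝ)⁻¹ * ((K.factorial : ℝ) * (2 * S) / ((K:ℝ) * ((K:ℝ) - 1))) := by
      intro m; rw [← Finset.mul_sum, hm m]
    rw [Finset.sum_congr rfl fun m _ => this m, Finset.sum_const, Finset.card_univ,
      Fintype.card_fin, trace_omegaLift, ← hS, nsmul_eq_mul]
    field_simp
  have hJ := jensen_exp (n := K.factorial) K.factorial_pos
    (ι := Equiv.Perm (Fin K)) (by simp [Fintype.card_perm])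
    (fun σ => ∑ m, (M:ℝ)⁻¹ * f (σ (p m 0)) (σ (p m 1)))
  rw [hid] at hJ
  refine hJ.trans (le_of_eq ?_)
  congr 1
  refine Finset.sum_congr rfl fun σ _ => ?_
  rw [Real.exp_sum]
  exact Finset.prod_congr rfl fun m _ => by rw [trace_smul_mul]

lemma stepC {d M r K : ℕ} (μ : Fin d → ℝ) (G : Fin d → Fin d → ℝ)
    (e : (Fin M × Fin 2) ⊕ Fin r ≃ Fin K) :
    ∑ a : Fin K → Fin d, (∏ k, μ (a k)) *
        ∏ m, G (a (e (Sum.inl (m, 0)))) (a (e (Sum.inl (m, 1)))) =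
      (∑ i, ∑ j, μ i * μ j * G i j) ^ M * (∑ i, μ i) ^ r := by
  classical
  set h : (Fin 2 → Fin d) → ℝ := fun v => μ (v 0) * μ (v 1) * G (v 0) (v 1) with hh
  have step1 : ∀ a : Fin K → Fin d, (∏ k, μ (a k)) *
      ∏ m, G (a (e (Sum.inl (m, 0)))) (a (e (Sum.inl (m, 1)))) =
      (∏ m, h (fun t => a (e (Sum.inl (m, t))))) * ∏ s, μ (a (e (Sum.inr s))) := by
    intro a
    have h1 : ∏ k, μ (a k) = ∏ z : (Fin M × Fin 2) ⊕ Fin r, μ (a (e z)) :=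
      (Equiv.prod_comp e (fun k => μ (a k))).symm
    rw [h1, Fintype.prod_sum_type, Fintype.prod_prod_type]
    simp only [hh, Fin.prod_univ_two]
    simp only [Finset.prod_mul_distrib]
    ring
  rw [Finset.sum_congr rfl fun a _ => step1 a]
  set Eqv : (Fin K → Fin d) ≃ ((Fin M → Fin 2 → Fin d) × (Fin r → Fin d)) :=
    (Equiv.arrowCongr e.symm (Equiv.refl (Fin d))).trans
      ((Equiv.sumArrowEquivProdArrow _ _ _).trans
        ((Equiv.curry _ _ _).prodCongr (Equiv.refl _))) with hEqv
  have step2 : ∑ a : Fin K → Fin d,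
      (∏ m, h (fun t => a (e (Sum.inl (m, t))))) * ∏ s, μ (a (e (Sum.inr s))) =
      ∑ cu : (Fin M → Fin 2 → Fin d) × (Fin r → Fin d),
        (∏ m, h (cu.1 m)) * ∏ s, μ (cu.2 s) :=
    Fintype.sum_equiv Eqv _ _ fun a => rfl
  rw [step2, Fintype.sum_prod_type]
  have step3 : ∑ c : Fin M → Fin 2 → Fin d, ∑ u : Fin r → Fin d,
      (∏ m, h (c m)) * ∏ s, μ (u s) =
      (∑ c : Fin M → Fin 2 → Fin d, ∏ m, h (c m)) *
        (∑ u : Fin r → Fin d, ∏ s, μ (u s)) := by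
    rw [Finset.sum_mul_sum]
  rw [step3]
  have h4 : ∑ c : Fin M → Fin 2 → Fin d, ∏ m, h (c m) =
      (∑ v : Fin 2 → Fin d, h v) ^ M := by
    rw [← Fintype.prod_sum (κ := fun _ : Fin M => Fin 2 → Fin d) (f := fun _ v => h v),
      Finset.prod_const, Finset.card_univ, Fintype.card_fin]
  have h5 : ∑ v : Fin 2 → Fin d, h v = ∑ i, ∑ j, μ i * μ j * G i j := by
    have h5' : ∑ v : Fin 2 → Fin d, h v = ∑ p : Fin d × Fin d, μ p.1 * μ p.2 * G p.1 p.2 :=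
      Fintype.sum_equiv (piFinTwoEquiv fun _ => Fin d) _ _ fun v => rfl
    rw [h5', Fintype.sum_prod_type]
  have h6 : ∑ u : Fin r → Fin d, ∏ s, μ (u s) = (∑ i, μ i) ^ r := by
    rw [← Fintype.prod_sum (κ := fun _ : Fin r => Fin d) (f := fun _ i => μ i),
      Finset.prod_const, Finset.card_univ, Fintype.card_fin]
  rw [h4, h5, h6]

lemma main_real {d K : ℕ} (hK : 2 ≤ K) (μ : Fin d → ℝ)
    (hμ0 : ∀ i, 0 ≤ μ i) (hμ1 : ∑ i, μ i = 1) (H : Matrix (Fin d) (Fin d) ℝ) :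
    ∑ a : Fin K → Fin d, (∏ k, μ (a k)) *
        Real.exp ((H * omegaLift (fun k => Pi.single (a k) (1:ℝ))).trace) ≤
      (∑ i, ∑ j, μ i * μ j * Real.exp
        (((((K / 2 : ℕ) : ℝ))⁻¹ • H) * omegaPair (Pi.single i 1) (Pi.single j 1)).trace) ^ (K / 2) := by
  set M := K / 2 with hMdef
  have hM : 1 ≤ M := by omega
  set r := K - 2 * M with hrdef
  have hKe : M * 2 + r = K := by omega
  set e : (Fin M × Fin 2) ⊕ Fin r ≃ Fin K :=
    (finProdFinEquiv.sumCongr (Equiv.refl (Fin r))).trans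
      ((finSumFinEquiv).trans (finCongr hKe)) with he
  set G : Fin d → Fin d → ℝ := fun i j =>
    Real.exp ((((M : ℝ))⁻¹ • H) * omegaPair (Pi.single i 1) (Pi.single j 1)).trace with hG
  have hp : ∀ m : Fin M, e (Sum.inl (m, 0)) ≠ e (Sum.inl (m, 1)) := by
    intro m hcon
    have := e.injective hcon
    simp at this
  have hfac0 : (K.factorial : ℝ) ≠ 0 := by exact_mod_cast K.factorial_pos.ne'
  calc ∑ a : Fin K → Fin d, (∏ k, μ (a k)) *
        Real.exp ((H * omegaLift (fun k => Pi.single (a k) (1:ℝ))).trace)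
      ≤ ∑ a : Fin K → Fin d, (∏ k, μ (a k)) * ((K.factorial : ℝ)⁻¹ *
          ∑ σ : Equiv.Perm (Fin K), ∏ m,
            G (a (σ (e (Sum.inl (m, 0))))) (a (σ (e (Sum.inl (m, 1)))))) := by
        refine Finset.sum_le_sum fun a _ => ?_
        refine mul_le_mul_of_nonneg_left ?_ (Finset.prod_nonneg fun k _ => hμ0 _)
        exact stepA hK hM (fun m t => e (Sum.inl (m, t))) hp H (fun k => Pi.single (a k) 1)
    _ = (K.factorial : ℝ)⁻¹ * ∑ σ : Equiv.Perm (Fin K), ∑ a : Fin K → Fin d,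
          (∏ k, μ (a k)) * ∏ m,
            G (a (σ (e (Sum.inl (m, 0))))) (a (σ (e (Sum.inl (m, 1))))) := by
        simp_rw [Finset.mul_sum]
        rw [Finset.sum_comm]
        exact Finset.sum_congr rfl fun σ _ => Finset.sum_congr rfl fun a _ => by ring
    _ = (K.factorial : ℝ)⁻¹ * ∑ _σ : Equiv.Perm (Fin K),
          ((∑ i, ∑ j, μ i * μ j * G i j) ^ M * (∑ i, μ i) ^ r) := by
        congr 1
        exact Finset.sum_congr rfl fun σ _ => stepC μ G (e.trans σ)
    _ = (∑ i, ∑ j, μ i * μ j * G i j) ^ M := by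
        rw [Finset.sum_const, Finset.card_univ, Fintype.card_perm, Fintype.card_fin,
          hμ1, one_pow, mul_one, nsmul_eq_mul, ← mul_assoc, inv_mul_cancel₀ hfac0, one_mul]

/-- for i.i.d. `ζ_1,…,ζ_K ∼ P_μ` and symmetric `H`,
`E[exp(Tr(H·ω[ζ^K]))] ≤ (E[exp(Tr((H/M)·ω_{12}[ζ²]))])^M` with `M = ⌊K/2⌋`. -/
theorem statement10 {d K : ℕ} (hK : 2 ≤ K) (μ : Fin d → ℝ)
    (hμ0 : ∀ i, 0 ≤ μ i) (hμ1 : ∑ i, μ i = 1)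
    (H : Matrix (Fin d) (Fin d) ℝ) (hHsym : H.IsSymm) :
    ∫⁻ ζ, ENNReal.ofReal (Real.exp ((H * omegaLift ζ).trace))
        ∂(Measure.pi fun _ : Fin K => discDist μ)
      ≤ (∫⁻ p, ENNReal.ofReal (Real.exp
            ((((((K / 2 : ℕ) : ℝ))⁻¹ • H) * omegaPair p.1 p.2).trace))
          ∂((discDist μ).prod (discDist μ))) ^ (K / 2) := by
  set g : (Fin d → ℝ) → (Fin d → ℝ) → ℝ := fun x y =>
    Real.exp (((((K / 2 : ℕ) : ℝ))⁻¹ • H * omegaPair x y).trace) with hg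
  -- measurability of the pair integrand
  have hmeas : Measurable (fun p : (Fin d → ℝ) × (Fin d → ℝ) =>
      ENNReal.ofReal (g p.1 p.2)) := by
    refine ENNReal.measurable_ofReal.comp (Real.measurable_exp.comp ?_)
    simp only [Matrix.trace, Matrix.diag, Matrix.mul_apply, omegaPair,
      Matrix.smul_apply, Matrix.add_apply, Matrix.vecMulVec_apply, smul_eq_mul]
    refine Finset.measurable_sum _ fun i _ => Finset.measurable_sum _ fun j _ => ?_
    fun_prop
  -- compute LHS
  have hLHS : ∫⁻ ζ, ENNReal.ofReal (Real.exp ((H * omegaLift ζ).trace))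
      ∂(Measure.pi fun _ : Fin K => discDist μ) =
      ∑ a : Fin K → Fin d, (∏ k, ENNReal.ofReal (μ (a k))) *
        ENNReal.ofReal (Real.exp ((H * omegaLift (fun k => Pi.single (a k) (1:ℝ))).trace)) := by
    rw [pi_discDist μ, lintegral_finset_sum_measure]
    simp [lintegral_smul_measure, lintegral_dirac]
  -- compute RHS integral
  have hRHS : ∫⁻ p, ENNReal.ofReal (g p.1 p.2) ∂((discDist μ).prod (discDist μ)) =
      ∑ i, ENNReal.ofReal (μ i) * ∑ j, ENNReal.ofReal (μ j) *
        ENNReal.ofReal (g (Pi.single i 1) (Pi.single j 1)) := by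
    rw [lintegral_prod _ hmeas.aemeasurable]
    rw [lintegral_discDist]
    exact Finset.sum_congr rfl fun i _ => by rw [lintegral_discDist]
  rw [hLHS, hRHS]
  -- convert to real statements
  have hsum_nonneg : ∀ x : Fin d → ℝ, 0 ≤ ∑ j, μ j * g x (Pi.single j 1) :=
    fun x => Finset.sum_nonneg fun j _ => mul_nonneg (hμ0 j) (Real.exp_pos _).le
  have hR : ∑ i, ENNReal.ofReal (μ i) * ∑ j, ENNReal.ofReal (μ j) *
      ENNReal.ofReal (g (Pi.single i 1) (Pi.single j 1)) =
      ENNReal.ofReal (∑ i, ∑ j, μ i * μ j * g (Pi.single i 1) (Pi.single j 1)) := by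
    rw [ENNReal.ofReal_sum_of_nonneg fun i _ => Finset.sum_nonneg fun j _ =>
      mul_nonneg (mul_nonneg (hμ0 i) (hμ0 j)) (Real.exp_pos _).le]
    refine Finset.sum_congr rfl fun i _ => ?_
    rw [ENNReal.ofReal_sum_of_nonneg fun j _ =>
      mul_nonneg (mul_nonneg (hμ0 i) (hμ0 j)) (Real.exp_pos _).le]
    rw [Finset.mul_sum]
    refine Finset.sum_congr rfl fun j _ => ?_
    rw [← ENNReal.ofReal_mul (hμ0 j), ← ENNReal.ofReal_mul (hμ0 i), mul_assoc]
  have hL : ∑ a : Fin K → Fin d, (∏ k, ENNReal.ofReal (μ (a k))) *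
      ENNReal.ofReal (Real.exp ((H * omegaLift (fun k => Pi.single (a k) (1:ℝ))).trace)) =
      ENNReal.ofReal (∑ a : Fin K → Fin d, (∏ k, μ (a k)) *
        Real.exp ((H * omegaLift (fun k => Pi.single (a k) (1:ℝ))).trace)) := by
    rw [ENNReal.ofReal_sum_of_nonneg fun a _ =>
      mul_nonneg (Finset.prod_nonneg fun k _ => hμ0 _) (Real.exp_pos _).le]
    refine Finset.sum_congr rfl fun a _ => ?_
    rw [ENNReal.ofReal_mul (Finset.prod_nonneg fun k _ => hμ0 _),
      ENNReal.ofReal_prod_of_nonneg fun k _ => hμ0 _]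
  rw [hR, hL]
  have hTnn : 0 ≤ ∑ i, ∑ j, μ i * μ j * g (Pi.single i 1) (Pi.single j 1) :=
    Finset.sum_nonneg fun i _ => Finset.sum_nonneg fun j _ =>
      mul_nonneg (mul_nonneg (hμ0 i) (hμ0 j)) (Real.exp_pos _).le
  rw [← ENNReal.ofReal_pow hTnn]
  exact ENNReal.ofReal_le_ofReal (main_real hK μ hμ0 hμ1 H)

end
end

section
/- Assume in addition that Φ(0;μ) ≥ 0 for every μ∈M, and let ε∈(0,1). Define Ψ̂₊(f) = inf{ Ψ₊(f,α) + α·ln(2/ε) : α>0, f/α∈F } and Ψ̂₋(f) = inf{ Ψ₋(f,β) + β·ln(2/ε) : β>0, f/β∈F }. If f̄∈ℝ^{n_F}, κ̄∈ℝ, ρ̄∈ℝ satisfy Ψ̂₊(f̄) ≤ ρ̄ − κ̄ and Ψ̂₋(f̄) ≤ ρ̄ + κ̄, then for every x∈X and every Borel probability measure P on ℝ^{n_F} associated with x, Prob_{ω∼P}{ |⟨f̄,ω⟩ + κ̄ − G(x)| > ρ̄ } ≤ ε. -/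
open Matrix MeasureTheory Real

noncomputable section

/-- `Ψ₊(f,α) = sup_{x∈𝒳} [α·Φ(f/α; A(x)) − G(x)]`, where `G(x) = ⟨g,x⟩ + c`. -/
def PsiPlus {nF nM nX : ℕ} (Φ : (Fin nF → ℝ) → (Fin nM → ℝ) → ℝ)
    (A : (Fin nX → ℝ) →ᵃ[ℝ] (Fin nM → ℝ)) (g : Fin nX → ℝ) (c : ℝ)
    (𝒳 : Set (Fin nX → ℝ)) (f : Fin nF → ℝ) (α : ℝ) : ℝ :=
  sSup ((fun x => α * Φ (α⁻¹ • f) (A x) - (g ⬝ᵥ x + c)) '' 𝒳)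

/-- `Ψ₋(f,β) = sup_{x∈𝒳} [β·Φ(−f/β; A(x)) + G(x)]`. -/
def PsiMinus {nF nM nX : ℕ} (Φ : (Fin nF → ℝ) → (Fin nM → ℝ) → ℝ)
    (A : (Fin nX → ℝ) →ᵃ[ℝ] (Fin nM → ℝ)) (g : Fin nX → ℝ) (c : ℝ)
    (𝒳 : Set (Fin nX → ℝ)) (f : Fin nF → ℝ) (β : ℝ) : ℝ :=
  sSup ((fun x => β * Φ (-(β⁻¹ • f)) (A x) + (g ⬝ᵥ x + c)) '' 𝒳)

/-- A Borel probability measure `P` is associated with parameter `μ` if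
`∫ e^{⟨f,ω⟩} P(dω) ≤ e^{Φ(f;μ)}` for all `f ∈ F`
(i.e. `ln ∫ e^{⟨f,ω⟩} P(dω) ≤ Φ(f;μ)`). -/
def AssocWith {nF nM : ℕ} (Φ : (Fin nF → ℝ) → (Fin nM → ℝ) → ℝ)
    (F : Set (Fin nF → ℝ)) (μ : Fin nM → ℝ) (P : Measure (Fin nF → ℝ)) : Prop :=
  ∀ f ∈ F, ∫⁻ ω, ENNReal.ofReal (Real.exp (f ⬝ᵥ ω)) ∂P
    ≤ ENNReal.ofReal (Real.exp (Φ f μ))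

/-- `Ψ̂₊(f) = inf{Ψ₊(f,α) + α·r : α>0, f/α ∈ F}` (with `r` standing for `ln(2/ε)`,
or `K⁻¹ln(2/ε)` in the repeated-observations case). -/
def PsiHatPlus {nF nM nX : ℕ} (F : Set (Fin nF → ℝ))
    (Φ : (Fin nF → ℝ) → (Fin nM → ℝ) → ℝ)
    (A : (Fin nX → ℝ) →ᵃ[ℝ] (Fin nM → ℝ)) (g : Fin nX → ℝ) (c : ℝ)
    (𝒳 : Set (Fin nX → ℝ)) (r : ℝ) (f : Fin nF → ℝ) : ℝ :=
  sInf {t : ℝ | ∃ α : ℝ, 0 < α ∧ α⁻¹ • f ∈ F ∧ t = PsiPlus Φ A g c 𝒳 f α + α * r}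

/-- `Ψ̂₋(f) = inf{Ψ₋(f,β) + β·r : β>0, f/β ∈ F}`. -/
def PsiHatMinus {nF nM nX : ℕ} (F : Set (Fin nF → ℝ))
    (Φ : (Fin nF → ℝ) → (Fin nM → ℝ) → ℝ)
    (A : (Fin nX → ℝ) →ᵃ[ℝ] (Fin nM → ℝ)) (g : Fin nX → ℝ) (c : ℝ)
    (𝒳 : Set (Fin nX → ℝ)) (r : ℝ) (f : Fin nF → ℝ) : ℝ :=
  sInf {t : ℝ | ∃ β : ℝ, 0 < β ∧ β⁻¹ • f ∈ F ∧ t = PsiMinus Φ A g c 𝒳 f β + β * r}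


lemma dotProduct_cont {n : ℕ} (h : Fin n → ℝ) : Continuous fun ω : Fin n → ℝ => h ⬝ᵥ ω := by
  unfold dotProduct
  exact continuous_finset_sum _ fun i _ => continuous_const.mul (continuous_apply i)

lemma chernoff {n : ℕ} (P : Measure (Fin n → ℝ)) (h : Fin n → ℝ) (s B : ℝ)
    (hint : ∫⁻ ω, ENNReal.ofReal (Real.exp (h ⬝ᵥ ω)) ∂P ≤ ENNReal.ofReal (Real.exp B)) :
    P {ω | s ≤ h ⬝ᵥ ω} ≤ ENNReal.ofReal (Real.exp (B - s)) := by
  have hmeas : AEMeasurable (fun ω => ENNReal.ofReal (Real.exp (h ⬝ᵥ ω))) P :=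
    ((ENNReal.continuous_ofReal.comp
      (Real.continuous_exp.comp (dotProduct_cont h))).measurable).aemeasurable
  have key := mul_meas_ge_le_lintegral₀ hmeas (ENNReal.ofReal (Real.exp s))
  have hsub : {ω : Fin n → ℝ | s ≤ h ⬝ᵥ ω}
      ⊆ {ω | ENNReal.ofReal (Real.exp s) ≤ ENNReal.ofReal (Real.exp (h ⬝ᵥ ω))} :=
    fun ω hw => ENNReal.ofReal_le_ofReal (Real.exp_le_exp.mpr hw)
  have h1 : ENNReal.ofReal (Real.exp s) * P {ω | s ≤ h ⬝ᵥ ω} ≤ ENNReal.ofReal (Real.exp B) :=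
    le_trans (mul_le_mul_right (measure_mono hsub) _) (le_trans key hint)
  have hne : ENNReal.ofReal (Real.exp s) ≠ 0 := by
    simp [ENNReal.ofReal_eq_zero, not_le, Real.exp_pos]
  have : P {ω | s ≤ h ⬝ᵥ ω} ≤ ENNReal.ofReal (Real.exp B) / ENNReal.ofReal (Real.exp s) := by
    rw [ENNReal.le_div_iff_mul_le (Or.inl hne) (Or.inl ENNReal.ofReal_ne_top)]
    rw [mul_comm]; exact h1
  refine le_trans this (le_of_eq ?_)
  rw [Real.exp_sub, ENNReal.ofReal_div_of_pos (Real.exp_pos s)]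

/-- risk bound for the affine estimate built from a feasible solution
of the system `Ψ̂₊(f̄) ≤ ρ̄ − κ̄`, `Ψ̂₋(f̄) ≤ ρ̄ + κ̄`. -/
theorem statement13 {nF nM nX : ℕ}
    (F : Set (Fin nF → ℝ)) (hFcl : IsClosed F) (hFconv : Convex ℝ F)
    (hFsymm : ∀ f ∈ F, -f ∈ F) (hF0 : 0 ∈ interior F)
    (M : Set (Fin nM → ℝ)) (hMcl : IsClosed M) (hMconv : Convex ℝ M)
    (Φ : (Fin nF → ℝ) → (Fin nM → ℝ) → ℝ)
    (hΦcont : ContinuousOn (fun p : (Fin nF → ℝ) × (Fin nM → ℝ) => Φ p.1 p.2) (F ×ˢ M))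
    (hΦconv : ∀ μ ∈ M, ConvexOn ℝ F (fun f => Φ f μ))
    (hΦconc : ∀ f ∈ F, ConcaveOn ℝ M (fun μ => Φ f μ))
    (hΦ0 : ∀ μ ∈ M, 0 ≤ Φ 0 μ)
    (𝒳 : Set (Fin nX → ℝ)) (h𝒳ne : 𝒳.Nonempty) (h𝒳conv : Convex ℝ 𝒳)
    (h𝒳cpt : IsCompact 𝒳)
    (X : Set (Fin nX → ℝ)) (hXne : X.Nonempty) (hX𝒳 : X ⊆ 𝒳)
    (A : (Fin nX → ℝ) →ᵃ[ℝ] (Fin nM → ℝ)) (hA : ∀ x ∈ 𝒳, A x ∈ M)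
    (g : Fin nX → ℝ) (c : ℝ) (ε : ℝ) (hε0 : 0 < ε) (hε1 : ε < 1)
    (fbar : Fin nF → ℝ) (κbar ρbar : ℝ)
    (hplus : PsiHatPlus F Φ A g c 𝒳 (Real.log (2/ε)) fbar ≤ ρbar - κbar)
    (hminus : PsiHatMinus F Φ A g c 𝒳 (Real.log (2/ε)) fbar ≤ ρbar + κbar)
    (x : Fin nX → ℝ) (hx : x ∈ X)
    (P : Measure (Fin nF → ℝ)) [IsProbabilityMeasure P]
    (hassoc : AssocWith Φ F (A x) P) :
    P {ω | ρbar < |fbar ⬝ᵥ ω + κbar - (g ⬝ᵥ x + c)|} ≤ ENNReal.ofReal ε := by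
  set Gx := g ⬝ᵥ x + c with hGxdef
  set r := Real.log (2/ε) with hrdef
  have h2ε : (0:ℝ) < 2/ε := by positivity
  have hexp_r : Real.exp (-r) = ε/2 := by
    rw [Real.exp_neg, hrdef, Real.exp_log h2ε, inv_div]
  have hx𝒳 : x ∈ 𝒳 := hX𝒳 hx
  have hAx : A x ∈ M := hA x hx𝒳
  have hAcont : Continuous (A : (Fin nX → ℝ) → (Fin nM → ℝ)) :=
    A.continuous_of_finiteDimensional
  -- existence of admissible α
  obtain ⟨δ, hδ, hball⟩ : ∃ δ > 0, Metric.ball (0 : Fin nF → ℝ) δ ⊆ F := by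
    rcases Metric.mem_nhds_iff.mp (mem_interior_iff_mem_nhds.mp hF0) with ⟨δ, hδ, hb⟩
    exact ⟨δ, hδ, hb⟩
  have hadm : ∃ α : ℝ, 0 < α ∧ α⁻¹ • fbar ∈ F := by
    refine ⟨(‖fbar‖ + 1) * 2 / δ, by positivity, hball ?_⟩
    rw [Metric.mem_ball, dist_zero_right, norm_smul, norm_inv, Real.norm_eq_abs,
      abs_of_pos (by positivity), inv_div, div_mul_eq_mul_div, div_lt_iff₀ (by positivity)]
    nlinarith [norm_nonneg fbar, hδ]
  have h0F : (0 : Fin nF → ℝ) ∈ F := interior_subset hF0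
  -- one-sided bound (plus side)
  have bound_plus : ∀ η > 0,
      P {ω | ρbar + η ≤ fbar ⬝ᵥ ω + κbar - Gx} ≤ ENNReal.ofReal (ε/2) := by
    intro η hη
    have Sne : {t : ℝ | ∃ α : ℝ, 0 < α ∧ α⁻¹ • fbar ∈ F ∧
        t = PsiPlus Φ A g c 𝒳 fbar α + α * r}.Nonempty := by
      obtain ⟨α, hα, hmem⟩ := hadm
      exact ⟨_, α, hα, hmem, rfl⟩
    obtain ⟨t, ⟨α, hα, hαF, rfl⟩, hlt⟩ := Real.lt_sInf_add_pos Sne (half_pos hη)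
    have hlt' : PsiPlus Φ A g c 𝒳 fbar α + α * r < ρbar - κbar + η/2 := by
      have := hplus
      rw [PsiHatPlus] at this
      linarith
    set h := α⁻¹ • fbar with hhdef
    have hcont : ContinuousOn (fun x' => α * Φ h (A x') - (g ⬝ᵥ x' + c)) 𝒳 := by
      have h1 : ContinuousOn (fun x' => Φ h (A x')) 𝒳 :=
        hΦcont.comp ((continuous_const.prodMk hAcont).continuousOn)
          (fun x' hx' => Set.mk_mem_prod hαF (hA x' hx'))
      exact (continuousOn_const.mul h1).sub
        (((dotProduct_cont g).continuousOn).add continuousOn_const)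
    have hlb : α * Φ h (A x) - Gx ≤ PsiPlus Φ A g c 𝒳 fbar α :=
      le_csSup (h𝒳cpt.image_of_continuousOn hcont).bddAbove ⟨x, hx𝒳, rfl⟩
    set s := α⁻¹ * (ρbar + η - κbar + Gx) with hsdef
    have hexpo : Φ h (A x) - s ≤ -r := by
      have key : α * Φ h (A x) - (ρbar + η - κbar + Gx) ≤ -r * α := by nlinarith
      have h2 : (Φ h (A x) - s) * α = α * Φ h (A x) - (ρbar + η - κbar + Gx) := by
        rw [hsdef]; field_simp
      refine (mul_le_mul_iff_left₀ hα).mp ?_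
      rw [h2]; exact key
    have hev : {ω : Fin nF → ℝ | ρbar + η ≤ fbar ⬝ᵥ ω + κbar - Gx}
        = {ω | s ≤ h ⬝ᵥ ω} := by
      ext ω
      simp only [Set.mem_setOf_eq, hhdef, smul_dotProduct, smul_eq_mul, hsdef]
      rw [mul_le_mul_iff_right₀ (inv_pos.mpr hα)]
      constructor <;> intro <;> linarith
    rw [hev]
    calc P {ω | s ≤ h ⬝ᵥ ω} ≤ ENNReal.ofReal (Real.exp (Φ h (A x) - s)) :=
          chernoff P h s _ (hassoc h hαF)
      _ ≤ ENNReal.ofReal (Real.exp (-r)) :=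
          ENNReal.ofReal_le_ofReal (Real.exp_le_exp.mpr hexpo)
      _ = ENNReal.ofReal (ε/2) := by rw [hexp_r]
  -- one-sided bound (minus side)
  have bound_minus : ∀ η > 0,
      P {ω | ρbar + η ≤ -(fbar ⬝ᵥ ω + κbar - Gx)} ≤ ENNReal.ofReal (ε/2) := by
    intro η hη
    have Sne : {t : ℝ | ∃ β : ℝ, 0 < β ∧ β⁻¹ • fbar ∈ F ∧
        t = PsiMinus Φ A g c 𝒳 fbar β + β * r}.Nonempty := by
      obtain ⟨β, hβ, hmem⟩ := hadm
      exact ⟨_, β, hβ, hmem, rfl⟩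
    obtain ⟨t, ⟨β, hβ, hβF, rfl⟩, hlt⟩ := Real.lt_sInf_add_pos Sne (half_pos hη)
    have hlt' : PsiMinus Φ A g c 𝒳 fbar β + β * r < ρbar + κbar + η/2 := by
      have := hminus
      rw [PsiHatMinus] at this
      linarith
    set h := -(β⁻¹ • fbar) with hhdef
    have hhF : h ∈ F := hFsymm _ hβF
    have hcont : ContinuousOn (fun x' => β * Φ h (A x') + (g ⬝ᵥ x' + c)) 𝒳 := by
      have h1 : ContinuousOn (fun x' => Φ h (A x')) 𝒳 :=
        hΦcont.comp ((continuous_const.prodMk hAcont).continuousOn)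
          (fun x' hx' => Set.mk_mem_prod hhF (hA x' hx'))
      exact (continuousOn_const.mul h1).add
        (((dotProduct_cont g).continuousOn).add continuousOn_const)
    have hlb : β * Φ h (A x) + Gx ≤ PsiMinus Φ A g c 𝒳 fbar β :=
      le_csSup (h𝒳cpt.image_of_continuousOn hcont).bddAbove ⟨x, hx𝒳, rfl⟩
    set s := β⁻¹ * (ρbar + η + κbar - Gx) with hsdef
    have hexpo : Φ h (A x) - s ≤ -r := by
      have key : β * Φ h (A x) - (ρbar + η + κbar - Gx) ≤ -r * β := by nlinarith
      have h2 : (Φ h (A x) - s) * β = β * Φ h (A x) - (ρbar + η + κbar - Gx) := by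
        rw [hsdef]; field_simp
      refine (mul_le_mul_iff_left₀ hβ).mp ?_
      rw [h2]; exact key
    have hev : {ω : Fin nF → ℝ | ρbar + η ≤ -(fbar ⬝ᵥ ω + κbar - Gx)}
        = {ω | s ≤ h ⬝ᵥ ω} := by
      ext ω
      simp only [Set.mem_setOf_eq, hhdef, neg_dotProduct, smul_dotProduct,
        smul_eq_mul, hsdef, ← mul_neg]
      rw [mul_le_mul_iff_right₀ (inv_pos.mpr hβ)]
      constructor <;> intro <;> linarith
    rw [hev]
    calc P {ω | s ≤ h ⬝ᵥ ω} ≤ ENNReal.ofReal (Real.exp (Φ h (A x) - s)) :=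
          chernoff P h s _ (hassoc h hhF)
      _ ≤ ENNReal.ofReal (Real.exp (-r)) :=
          ENNReal.ofReal_le_ofReal (Real.exp_le_exp.mpr hexpo)
      _ = ENNReal.ofReal (ε/2) := by rw [hexp_r]
  -- combine two sides
  have bound : ∀ η > 0,
      P {ω | ρbar + η ≤ |fbar ⬝ᵥ ω + κbar - Gx|} ≤ ENNReal.ofReal ε := by
    intro η hη
    have hsub : {ω : Fin nF → ℝ | ρbar + η ≤ |fbar ⬝ᵥ ω + κbar - Gx|}
        ⊆ {ω | ρbar + η ≤ fbar ⬝ᵥ ω + κbar - Gx}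
          ∪ {ω | ρbar + η ≤ -(fbar ⬝ᵥ ω + κbar - Gx)} := by
      intro ω hω
      simp only [Set.mem_setOf_eq] at hω ⊢
      rcases le_abs.mp hω with h1 | h1
      · exact Or.inl h1
      · exact Or.inr h1
    calc P {ω | ρbar + η ≤ |fbar ⬝ᵥ ω + κbar - Gx|}
        ≤ P ({ω | ρbar + η ≤ fbar ⬝ᵥ ω + κbar - Gx}
            ∪ {ω | ρbar + η ≤ -(fbar ⬝ᵥ ω + κbar - Gx)}) := measure_mono hsub
      _ ≤ P {ω | ρbar + η ≤ fbar ⬝ᵥ ω + κbar - Gx}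
            + P {ω | ρbar + η ≤ -(fbar ⬝ᵥ ω + κbar - Gx)} := measure_union_le _ _
      _ ≤ ENNReal.ofReal (ε/2) + ENNReal.ofReal (ε/2) :=
            add_le_add (bound_plus η hη) (bound_minus η hη)
      _ = ENNReal.ofReal ε := by
            rw [← ENNReal.ofReal_add (by linarith) (by linarith)]; norm_num
  -- take the union over η = 1/(n+1)
  have hU : {ω : Fin nF → ℝ | ρbar < |fbar ⬝ᵥ ω + κbar - Gx|}
      = ⋃ n : ℕ, {ω | ρbar + 1/(n+1) ≤ |fbar ⬝ᵥ ω + κbar - Gx|} := by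
    ext ω
    simp only [Set.mem_setOf_eq, Set.mem_iUnion]
    constructor
    · intro hlt
      obtain ⟨n, hn⟩ := exists_nat_one_div_lt (sub_pos.mpr hlt)
      exact ⟨n, by linarith⟩
    · rintro ⟨n, hn⟩
      have hp : (0:ℝ) < 1/((n:ℝ)+1) := by positivity
      linarith
  have hdir : Directed (· ⊆ ·)
      (fun n : ℕ => {ω : Fin nF → ℝ | ρbar + 1/((n:ℝ)+1) ≤ |fbar ⬝ᵥ ω + κbar - Gx|}) := by
    apply Monotone.directed_le
    intro m n hmn ω hω
    simp only [Set.mem_setOf_eq] at hω ⊢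
    have hle : (1:ℝ)/((n:ℝ)+1) ≤ 1/((m:ℝ)+1) := by
      apply one_div_le_one_div_of_le (by positivity)
      have : (m:ℝ) ≤ (n:ℝ) := by exact_mod_cast hmn
      linarith
    linarith
  rw [hU, hdir.measure_iUnion]
  exact iSup_le fun n => bound _ (by positivity)

end
end
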